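/- Let (A, A*) be a tridiagonal pair on V with eigenspace orderings V_0, ..., V_d of A and V*_0, ..., V*_d of A*, and let (A', A*') be a second tridiagonal pair on V with eigenspace orderings V'_0, ..., V'_d of A' and V*'_0, ..., V*'_d of A*'. Assume V_i = V'_i and V*_i = V*'_i for 0 ≤ i ≤ d. Then Span{A, I} = Span{A', I} and Span{A*, I} = Span{A*', I} (as K-subspaces of End(V)). -/

import Mathlib

open Polynomial

/-- A tridiagonal pair on `V`, with eigenspace orderings `Ev 0, ..., Ev d` of `A`
(with eigenvalues `θ 0, ..., θ d`) and `Ew 0, ..., Ew d` of `B = A*`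
(with eigenvalues `θ' 0, ..., θ' d`).  For indices `i > d` we set `Ev i = ⊥`,
`Ew i = ⊥`, encoding the conventions `V_{-1} = 0`, `V_{d+1} = 0`
(note `Ev (0 - 1) = Ev 0` by truncated subtraction, which is harmless in the
tridiagonal conditions below since `Ev i` appears in the sum anyway). -/
structure TridiagonalPair (K V : Type*) [Field K] [AddCommGroup V] [Module K V]
    [FiniteDimensional K V] where
  A : Module.End K V
  B : Module.End K V
  d : ℕ
  Ev : ℕ → Submodule K V
  Ew : ℕ → Submodule K V
  θ : ℕ → K
  θ' : ℕ → K
  hEv_eig : ∀ i ≤ d, Ev i = Module.End.eigenspace A (θ i)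
  hEv_ne : ∀ i ≤ d, Ev i ≠ ⊥
  hEv_all : ∀ μ : K, Module.End.eigenspace A μ ≠ ⊥ → ∃ i ≤ d, θ i = μ
  hθ_inj : ∀ i ≤ d, ∀ j ≤ d, θ i = θ j → i = j
  hEv_top : (⨆ i ∈ Finset.range (d + 1), Ev i) = ⊤
  hEv_bot : ∀ i, d < i → Ev i = ⊥
  hEw_eig : ∀ i ≤ d, Ew i = Module.End.eigenspace B (θ' i)
  hEw_ne : ∀ i ≤ d, Ew i ≠ ⊥
  hEw_all : ∀ μ : K, Module.End.eigenspace B μ ≠ ⊥ → ∃ i ≤ d, θ' i = μ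
  hθ'_inj : ∀ i ≤ d, ∀ j ≤ d, θ' i = θ' j → i = j
  hEw_top : (⨆ i ∈ Finset.range (d + 1), Ew i) = ⊤
  hEw_bot : ∀ i, d < i → Ew i = ⊥
  hTriB : ∀ i ≤ d, ∀ v ∈ Ev i, B v ∈ Ev (i - 1) ⊔ Ev i ⊔ Ev (i + 1)
  hTriA : ∀ i ≤ d, ∀ v ∈ Ew i, A v ∈ Ew (i - 1) ⊔ Ew i ⊔ Ew (i + 1)
  hIrr : ∀ W : Submodule K V, (∀ v ∈ W, A v ∈ W) → (∀ v ∈ W, B v ∈ W) →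
    W = ⊥ ∨ W = ⊤

/-- The polynomial `τ_i = (λ - θ_0)(λ - θ_1) ⋯ (λ - θ_{i-1})`. -/
noncomputable def tau {K : Type*} [Field K] (θ : ℕ → K) (i : ℕ) : Polynomial K :=
  ∏ k ∈ Finset.range i, (X - C (θ k))

namespace TridiagonalPair

variable {K V : Type*} [Field K] [AddCommGroup V] [Module K V] [FiniteDimensional K V]

/-- The swapped tridiagonal pair `(A*, A)`. -/
def swap (p : TridiagonalPair K V) : TridiagonalPair K V where
  A := p.B
  B := p.A
  d := p.d
  Ev := p.Ew
  Ew := p.Ev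
  θ := p.θ'
  θ' := p.θ
  hEv_eig := p.hEw_eig
  hEv_ne := p.hEw_ne
  hEv_all := p.hEw_all
  hθ_inj := p.hθ'_inj
  hEv_top := p.hEw_top
  hEv_bot := p.hEw_bot
  hEw_eig := p.hEv_eig
  hEw_ne := p.hEv_ne
  hEw_all := p.hEv_all
  hθ'_inj := p.hθ_inj
  hEw_top := p.hEv_top
  hEw_bot := p.hEv_bot
  hTriB := p.hTriA
  hTriA := p.hTriB
  hIrr := fun W h1 h2 => p.hIrr W h2 h1

variable (p : TridiagonalPair K V)

/-- ascending flag for the `Ew` (eigenspaces of `B`). -/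
noncomputable def Wf (j : ℕ) : Submodule K V := ⨆ k ∈ Finset.range (j + 1), p.Ew k

/-- ascending flag for the `Ev`. -/
noncomputable def Yf (i : ℕ) : Submodule K V := ⨆ k ∈ Finset.range (i + 1), p.Ev k

/-- descending flag for the `Ev`. -/
noncomputable def Zf (i : ℕ) : Submodule K V := ⨆ k ∈ Finset.Icc i p.d, p.Ev k

lemma Ew_le_Wf {k j : ℕ} (h : k ≤ j) : p.Ew k ≤ p.Wf j := by
  rw [Wf]
  exact le_iSup₂_of_le k (Finset.mem_range.mpr (Nat.lt_succ_of_le h)) le_rfl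

lemma Ev_le_Yf {k i : ℕ} (h : k ≤ i) : p.Ev k ≤ p.Yf i := by
  rw [Yf]
  exact le_iSup₂_of_le k (Finset.mem_range.mpr (Nat.lt_succ_of_le h)) le_rfl

lemma Ev_le_Zf {k i : ℕ} (h1 : i ≤ k) (h2 : k ≤ p.d) : p.Ev k ≤ p.Zf i := by
  rw [Zf]
  exact le_iSup₂_of_le k (Finset.mem_Icc.mpr ⟨h1, h2⟩) le_rfl

lemma Wf_mono {j j' : ℕ} (h : j ≤ j') : p.Wf j ≤ p.Wf j' :=
  iSup₂_le (α := Submodule K V) fun k hk => p.Ew_le_Wf (le_trans (Nat.lt_succ_iff.mp (Finset.mem_range.mp hk)) h)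

lemma Yf_mono {i i' : ℕ} (h : i ≤ i') : p.Yf i ≤ p.Yf i' :=
  iSup₂_le fun k hk => p.Ev_le_Yf (le_trans (Nat.lt_succ_iff.mp (Finset.mem_range.mp hk)) h)

lemma Zf_anti {i i' : ℕ} (h : i ≤ i') : p.Zf i' ≤ p.Zf i :=
  iSup₂_le fun k hk => by
    have hk' := Finset.mem_Icc.mp hk
    exact p.Ev_le_Zf (le_trans h hk'.1) hk'.2

lemma Wf_zero : p.Wf 0 = p.Ew 0 := by
  apply le_antisymm
  · exact iSup₂_le fun k hk => by
      rw [Finset.mem_range, Nat.lt_one_iff] at hk; rw [hk]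
  · exact p.Ew_le_Wf le_rfl

lemma Zf_zero : p.Zf 0 = ⊤ := by
  rw [← p.hEv_top]
  apply le_antisymm
  · exact iSup₂_le fun k hk => le_iSup₂_of_le k
      (Finset.mem_range.mpr (Nat.lt_succ_of_le (Finset.mem_Icc.mp hk).2)) le_rfl
  · exact iSup₂_le fun k hk => p.Ev_le_Zf (Nat.zero_le _)
      (Nat.lt_succ_iff.mp (Finset.mem_range.mp hk))

lemma Zf_bot {i : ℕ} (h : p.d < i) : p.Zf i = ⊥ := by
  rw [Zf, Finset.Icc_eq_empty (by omega)]
  simp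

lemma Ew_bot_of_lt {k : ℕ} (h : p.d < k) : p.Ew k = ⊥ := p.hEw_bot k h

lemma A_apply_Ev {i : ℕ} (hi : i ≤ p.d) {v : V} (hv : v ∈ p.Ev i) :
    p.A v = p.θ i • v := by
  rw [p.hEv_eig i hi] at hv
  exact Module.End.mem_eigenspace_iff.mp hv

lemma B_apply_Ew {i : ℕ} (hi : i ≤ p.d) {v : V} (hv : v ∈ p.Ew i) :
    p.B v = p.θ' i • v := by
  rw [p.hEw_eig i hi] at hv
  exact Module.End.mem_eigenspace_iff.mp hv

/-- generic helper: to show `T` maps a finite sup into `N`, check it on each piece. -/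
lemma mem_of_iSup {F : Finset ℕ} {M : ℕ → Submodule K V} {T : Module.End K V}
    {N : Submodule K V} (h : ∀ k ∈ F, ∀ v ∈ M k, T v ∈ N) :
    ∀ v ∈ (⨆ k ∈ F, M k), T v ∈ N := by
  intro v hv
  have : (⨆ k ∈ F, M k) ≤ N.comap T :=
    iSup₂_le fun k hk => fun w hw => Submodule.mem_comap.mpr (h k hk w hw)
  exact this hv

lemma A_mem_Wf_succ {j : ℕ} : ∀ v ∈ p.Wf j, p.A v ∈ p.Wf (j + 1) := by
  intro v hv
  rw [Wf] at hv
  refine mem_of_iSup ?_ v hv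
  intro k hk v hv
  rw [Finset.mem_range, Nat.lt_succ_iff] at hk
  by_cases hkd : k ≤ p.d
  · have h3 := p.hTriA k hkd v hv
    have hle : p.Ew (k - 1) ⊔ p.Ew k ⊔ p.Ew (k + 1) ≤ p.Wf (j + 1) :=
      sup_le (sup_le (p.Ew_le_Wf (by omega)) (p.Ew_le_Wf (by omega)))
        (p.Ew_le_Wf (by omega))
    exact hle h3
  · rw [p.hEw_bot k (by omega)] at hv
    simp only [Submodule.mem_bot] at hv
    rw [hv, map_zero]; exact Submodule.zero_mem _

lemma B_mem_Yf_succ {i : ℕ} : ∀ v ∈ p.Yf i, p.B v ∈ p.Yf (i + 1) := by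
  intro v hv
  rw [Yf] at hv
  refine mem_of_iSup ?_ v hv
  intro k hk v hv
  rw [Finset.mem_range, Nat.lt_succ_iff] at hk
  by_cases hkd : k ≤ p.d
  · have h3 := p.hTriB k hkd v hv
    have hle : p.Ev (k - 1) ⊔ p.Ev k ⊔ p.Ev (k + 1) ≤ p.Yf (i + 1) :=
      sup_le (sup_le (p.Ev_le_Yf (by omega)) (p.Ev_le_Yf (by omega)))
        (p.Ev_le_Yf (by omega))
    exact hle h3
  · rw [p.hEv_bot k (by omega)] at hv
    simp only [Submodule.mem_bot] at hv
    rw [hv, map_zero]; exact Submodule.zero_mem _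

lemma B_mem_Zf_pred {i : ℕ} (hi : 1 ≤ i) : ∀ v ∈ p.Zf i, p.B v ∈ p.Zf (i - 1) := by
  intro v hv
  rw [Zf] at hv
  refine mem_of_iSup ?_ v hv
  intro k hk v hv
  rw [Finset.mem_Icc] at hk
  have h3 := p.hTriB k hk.2 v hv
  have h1 : p.Ev (k - 1) ≤ p.Zf (i - 1) := p.Ev_le_Zf (by omega) (by omega)
  have h2 : p.Ev k ≤ p.Zf (i - 1) := p.Ev_le_Zf (by omega) (by omega)
  have h4 : p.Ev (k + 1) ≤ p.Zf (i - 1) := by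
    by_cases hk1 : k + 1 ≤ p.d
    · exact p.Ev_le_Zf (by omega) hk1
    · rw [p.hEv_bot (k + 1) (by omega)]; exact bot_le
  exact (sup_le (sup_le h1 h2) h4) h3

lemma BW_twist {j : ℕ} (hj : 1 ≤ j) (hjd : j ≤ p.d) :
    ∀ v ∈ p.Wf j, p.B v - p.θ' j • v ∈ p.Wf (j - 1) := by
  intro v hv
  rw [Wf] at hv
  have h2 := mem_of_iSup (T := p.B - p.θ' j • 1)
    (F := Finset.range (j + 1)) (M := p.Ew) (N := p.Wf (j - 1)) ?_ v hv
  · simpa using h2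
  · intro k hk v hv
    rw [Finset.mem_range, Nat.lt_succ_iff] at hk
    simp only [LinearMap.sub_apply, LinearMap.smul_apply, Module.End.one_apply]
    rw [p.B_apply_Ew (le_trans hk hjd) hv, ← sub_smul]
    rcases eq_or_lt_of_le hk with h | h
    · rw [h]; simp
    · exact p.Ew_le_Wf (by omega) (Submodule.smul_mem _ _ hv)

lemma BW0 : ∀ v ∈ p.Wf 0, p.B v = p.θ' 0 • v := by
  intro v hv
  rw [p.Wf_zero] at hv
  exact p.B_apply_Ew (Nat.zero_le _) hv

lemma AY_twist {i : ℕ} (hi : 1 ≤ i) :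
    ∀ v ∈ p.Yf i, p.A v - p.θ i • v ∈ p.Yf (i - 1) := by
  intro v hv
  rw [Yf] at hv
  have h2 := mem_of_iSup (T := p.A - p.θ i • 1)
    (F := Finset.range (i + 1)) (M := p.Ev) (N := p.Yf (i - 1)) ?_ v hv
  · simpa using h2
  · intro k hk v hv
    rw [Finset.mem_range, Nat.lt_succ_iff] at hk
    simp only [LinearMap.sub_apply, LinearMap.smul_apply, Module.End.one_apply]
    by_cases hkd : k ≤ p.d
    · rw [p.A_apply_Ev hkd hv, ← sub_smul]
      rcases eq_or_lt_of_le hk with h | h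
      · rw [h]; simp
      · exact p.Ev_le_Yf (by omega) (Submodule.smul_mem _ _ hv)
    · rw [p.hEv_bot k (by omega)] at hv
      simp only [Submodule.mem_bot] at hv
      rw [hv]; simp

lemma AY0 : ∀ v ∈ p.Yf 0, p.A v = p.θ 0 • v := by
  intro v hv
  have h0 : p.Yf 0 = p.Ev 0 := by
    apply le_antisymm
    · rw [Yf]
      exact iSup₂_le fun k hk => by
        rw [Finset.mem_range, Nat.lt_one_iff] at hk; rw [hk]
    · exact p.Ev_le_Yf le_rfl
  rw [h0] at hv
  exact p.A_apply_Ev (Nat.zero_le _) hv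

lemma AZ_twist {i : ℕ} : ∀ v ∈ p.Zf i, p.A v - p.θ i • v ∈ p.Zf (i + 1) := by
  intro v hv
  rw [Zf] at hv
  have h2 := mem_of_iSup (T := p.A - p.θ i • 1)
    (F := Finset.Icc i p.d) (M := p.Ev) (N := p.Zf (i + 1)) ?_ v hv
  · simpa using h2
  · intro k hk v hv
    rw [Finset.mem_Icc] at hk
    simp only [LinearMap.sub_apply, LinearMap.smul_apply, Module.End.one_apply]
    rw [p.A_apply_Ev hk.2 hv, ← sub_smul]
    rcases eq_or_lt_of_le hk.1 with h | h
    · rw [← h]; simp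
    · exact p.Ev_le_Zf (by omega) hk.2 (Submodule.smul_mem _ _ hv)

lemma aeval_eigen {T : Module.End K V} {μ : K} {v : V}
    (hv : v ∈ Module.End.eigenspace T μ) (g : Polynomial K) :
    (aeval T g) v = g.eval μ • v := by
  have hTv : T v = μ • v := Module.End.mem_eigenspace_iff.mp hv
  have hpow : ∀ n : ℕ, (T ^ n) v = μ ^ n • v := by
    intro n
    induction n with
    | zero => simp
    | succ n ih =>
      rw [pow_succ, Module.End.mul_apply, hTv, map_smul, ih, smul_smul, pow_succ]
      ring_nf
  induction g using Polynomial.induction_on' with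
  | add f g hf hg => rw [map_add, LinearMap.add_apply, hf, hg, eval_add, add_smul]
  | monomial n a =>
    rw [aeval_monomial, Module.End.mul_apply, hpow, map_smul,
      Module.algebraMap_end_apply, eval_monomial, smul_smul, mul_comm]

lemma aeval_tau_succ {θf : ℕ → K} (T : Module.End K V) (k : ℕ) (v : V) :
    (aeval T (tau θf (k + 1))) v = (aeval T (tau θf k)) (T v - θf k • v) := by
  rw [tau, Finset.prod_range_succ, ← tau, map_mul, Module.End.mul_apply]
  congr 1
  rw [map_sub, aeval_X, aeval_C, LinearMap.sub_apply, Module.algebraMap_end_apply]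

lemma tau_eval {θf : ℕ → K} (k : ℕ) (x : K) :
    (tau θf k).eval x = ∏ j ∈ Finset.range k, (x - θf j) := by
  rw [tau, eval_prod]
  exact Finset.prod_congr rfl fun j _ => by rw [eval_sub, eval_X, eval_C]

lemma tauB_kill_W : ∀ j, j ≤ p.d → ∀ v ∈ p.Wf j, (aeval p.B (tau p.θ' (j + 1))) v = 0 := by
  intro j
  induction j with
  | zero =>
    intro _ v hv
    rw [aeval_tau_succ, p.BW0 v hv, sub_self, map_zero]
  | succ j ih =>
    intro hjd v hv
    rw [aeval_tau_succ]
    have h1 := p.BW_twist (Nat.succ_le_succ (Nat.zero_le _)) hjd v hv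
    simp only [Nat.add_sub_cancel, Nat.succ_sub_one, Nat.succ_eq_add_one] at h1
    exact ih (by omega) _ h1

lemma tauA_kill_Y : ∀ i, i ≤ p.d → ∀ v ∈ p.Yf i, (aeval p.A (tau p.θ (i + 1))) v = 0 := by
  intro i
  induction i with
  | zero =>
    intro _ v hv
    rw [aeval_tau_succ, p.AY0 v hv, sub_self, map_zero]
  | succ i ih =>
    intro hid v hv
    rw [aeval_tau_succ]
    have h1 := p.AY_twist (Nat.succ_le_succ (Nat.zero_le _)) v hv
    simp only [Nat.add_sub_cancel, Nat.succ_sub_one, Nat.succ_eq_add_one] at h1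
    exact ih (by omega) _ h1

lemma prodZ_kill : ∀ n i, p.d + 1 - i ≤ n →
    ∀ v ∈ p.Zf i, (aeval p.A (∏ k ∈ Finset.Icc i p.d, (X - C (p.θ k)))) v = 0 := by
  intro n
  induction n with
  | zero =>
    intro i hi v hv
    rw [p.Zf_bot (by omega)] at hv
    simp only [Submodule.mem_bot] at hv
    rw [hv, map_zero]
  | succ n ih =>
    intro i hi v hv
    by_cases hid : i ≤ p.d
    · have hins : Finset.Icc i p.d = insert i (Finset.Icc (i + 1) p.d) := by
        ext a; simp only [Finset.mem_Icc, Finset.mem_insert]; omega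
      have hnotmem : i ∉ Finset.Icc (i + 1) p.d := by simp
      rw [hins, Finset.prod_insert hnotmem, mul_comm, map_mul, Module.End.mul_apply]
      have h2 : (aeval p.A (X - C (p.θ i))) v = p.A v - p.θ i • v := by
        rw [map_sub, aeval_X, aeval_C, LinearMap.sub_apply, Module.algebraMap_end_apply]
      rw [h2]
      exact ih (i + 1) (by omega) _ (p.AZ_twist v hv)
    · rw [p.Zf_bot (by omega)] at hv
      simp only [Submodule.mem_bot] at hv
      rw [hv, map_zero]

lemma Wf_ne_top (hd : 1 ≤ p.d) : p.Wf (p.d - 1) ≠ ⊤ := by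
  intro h
  apply p.hEw_ne p.d le_rfl
  rw [Submodule.eq_bot_iff]
  intro v hv
  have hv' : v ∈ p.Wf (p.d - 1) := by rw [h]; trivial
  have h1 := p.tauB_kill_W (p.d - 1) (by omega) v hv'
  rw [show p.d - 1 + 1 = p.d by omega] at h1
  have h2 : v ∈ Module.End.eigenspace p.B (p.θ' p.d) := by
    rw [← p.hEw_eig p.d le_rfl]; exact hv
  rw [aeval_eigen h2, tau_eval] at h1
  have h3 : (∏ j ∈ Finset.range p.d, (p.θ' p.d - p.θ' j)) ≠ 0 := by
    rw [Finset.prod_ne_zero_iff]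
    intro j hj
    rw [Finset.mem_range] at hj
    exact sub_ne_zero_of_ne fun hc => by
      have := p.hθ'_inj p.d le_rfl j (by omega) hc
      omega
  rcases smul_eq_zero.mp h1 with h | h
  · exact absurd h h3
  · exact h

lemma YW_bot (hd : 1 ≤ p.d) {i : ℕ} (hi : i ≤ p.d - 1) : p.Yf i ⊓ p.Wf 0 = ⊥ := by
  set s := p.d - 1 with hs
  set P : Submodule K V := ⨆ t ∈ Finset.range (s + 1), (p.Yf (s - t) ⊓ p.Wf t) with hP
  have hterm : ∀ t, t ≤ s → p.Yf (s - t) ⊓ p.Wf t ≤ P := fun t ht =>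
    le_iSup₂_of_le t (Finset.mem_range.mpr (by omega)) le_rfl
  have hA : ∀ v ∈ P, p.A v ∈ P := by
    rw [hP]
    apply mem_of_iSup
    intro t ht v hv
    rw [Finset.mem_range, Nat.lt_succ_iff] at ht
    obtain ⟨hY, hW⟩ := Submodule.mem_inf.mp hv
    have hpart2 : p.θ (s - t) • v ∈ P :=
      hterm t ht (Submodule.smul_mem _ _ (Submodule.mem_inf.mpr ⟨hY, hW⟩))
    have hsplit : p.A v = (p.A v - p.θ (s - t) • v) + p.θ (s - t) • v := by abel
    rw [hsplit]
    refine Submodule.add_mem _ ?_ hpart2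
    by_cases hst : s - t = 0
    · rw [hst] at hY ⊢
      rw [p.AY0 v hY, sub_self]
      exact Submodule.zero_mem _
    · have h1 : p.A v - p.θ (s - t) • v ∈ p.Yf (s - t - 1) :=
        p.AY_twist (by omega) v hY
      have h2 : p.A v - p.θ (s - t) • v ∈ p.Wf (t + 1) := by
        refine Submodule.sub_mem _ (p.A_mem_Wf_succ v hW) ?_
        exact p.Wf_mono (by omega) (Submodule.smul_mem _ _ hW)
      have h3 : s - t - 1 = s - (t + 1) := by omega
      rw [h3] at h1
      exact hterm (t + 1) (by omega) (Submodule.mem_inf.mpr ⟨h1, h2⟩)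
  have hB : ∀ v ∈ P, p.B v ∈ P := by
    rw [hP]
    apply mem_of_iSup
    intro t ht v hv
    rw [Finset.mem_range, Nat.lt_succ_iff] at ht
    obtain ⟨hY, hW⟩ := Submodule.mem_inf.mp hv
    have hpart2 : p.θ' t • v ∈ P :=
      hterm t ht (Submodule.smul_mem _ _ (Submodule.mem_inf.mpr ⟨hY, hW⟩))
    have hsplit : p.B v = (p.B v - p.θ' t • v) + p.θ' t • v := by abel
    rw [hsplit]
    refine Submodule.add_mem _ ?_ hpart2
    by_cases ht0 : t = 0
    · rw [ht0] at hW ⊢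
      rw [p.BW0 v hW, sub_self]
      exact Submodule.zero_mem _
    · have h1 : p.B v - p.θ' t • v ∈ p.Wf (t - 1) :=
        p.BW_twist (by omega) (by omega) v hW
      have h2 : p.B v - p.θ' t • v ∈ p.Yf (s - (t - 1)) := by
        have h3 : s - (t - 1) = (s - t) + 1 := by omega
        rw [h3]
        refine Submodule.sub_mem _ (p.B_mem_Yf_succ v hY) ?_
        exact p.Yf_mono (by omega) (Submodule.smul_mem _ _ hY)
      exact hterm (t - 1) (by omega) (Submodule.mem_inf.mpr ⟨h2, h1⟩)
  rcases p.hIrr P hA hB with h | h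
  · rw [Submodule.eq_bot_iff]
    intro v hv
    have h2 : p.Yf i ⊓ p.Wf 0 ≤ P := by
      refine le_trans ?_ (hterm 0 (Nat.zero_le _))
      exact inf_le_inf (p.Yf_mono (by omega)) le_rfl
    rw [← Submodule.mem_bot (R := K), ← h]
    exact h2 hv
  · exfalso
    apply p.Wf_ne_top hd
    rw [← top_le_iff, ← h]
    refine iSup₂_le fun t ht => ?_
    rw [Finset.mem_range, Nat.lt_succ_iff] at ht
    exact le_trans inf_le_right (p.Wf_mono ht)

lemma ZW_bot (hd : 1 ≤ p.d) {k : ℕ} (hk : k ≤ p.d) : p.Zf (k + 1) ⊓ p.Wf k = ⊥ := by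
  rcases Nat.lt_or_ge k p.d with hkd | hkd
  swap
  · have : k = p.d := by omega
    rw [this, p.Zf_bot (by omega), bot_inf_eq]
  set s := p.d - 1 with hs
  set P : Submodule K V := ⨆ t ∈ Finset.range (s + 1), (p.Zf (t + 1) ⊓ p.Wf t) with hP
  have hterm : ∀ t, t ≤ s → p.Zf (t + 1) ⊓ p.Wf t ≤ P := fun t ht =>
    le_iSup₂_of_le t (Finset.mem_range.mpr (by omega)) le_rfl
  have hA : ∀ v ∈ P, p.A v ∈ P := by
    rw [hP]
    apply mem_of_iSup
    intro t ht v hv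
    rw [Finset.mem_range, Nat.lt_succ_iff] at ht
    obtain ⟨hZ, hW⟩ := Submodule.mem_inf.mp hv
    have hpart2 : p.θ (t + 1) • v ∈ P :=
      hterm t ht (Submodule.smul_mem _ _ (Submodule.mem_inf.mpr ⟨hZ, hW⟩))
    have hsplit : p.A v = (p.A v - p.θ (t + 1) • v) + p.θ (t + 1) • v := by abel
    rw [hsplit]
    refine Submodule.add_mem _ ?_ hpart2
    have h1 : p.A v - p.θ (t + 1) • v ∈ p.Zf (t + 2) := p.AZ_twist v hZ
    by_cases hts : t = s
    · have hb : p.Zf (t + 2) = ⊥ := p.Zf_bot (by omega)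
      rw [hb, Submodule.mem_bot] at h1
      rw [h1]
      exact Submodule.zero_mem _
    · have h2 : p.A v - p.θ (t + 1) • v ∈ p.Wf (t + 1) := by
        refine Submodule.sub_mem _ (p.A_mem_Wf_succ v hW) ?_
        exact p.Wf_mono (by omega) (Submodule.smul_mem _ _ hW)
      exact hterm (t + 1) (by omega) (Submodule.mem_inf.mpr ⟨h1, h2⟩)
  have hB : ∀ v ∈ P, p.B v ∈ P := by
    rw [hP]
    apply mem_of_iSup
    intro t ht v hv
    rw [Finset.mem_range, Nat.lt_succ_iff] at ht
    obtain ⟨hZ, hW⟩ := Submodule.mem_inf.mp hv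
    have hpart2 : p.θ' t • v ∈ P :=
      hterm t ht (Submodule.smul_mem _ _ (Submodule.mem_inf.mpr ⟨hZ, hW⟩))
    have hsplit : p.B v = (p.B v - p.θ' t • v) + p.θ' t • v := by abel
    rw [hsplit]
    refine Submodule.add_mem _ ?_ hpart2
    by_cases ht0 : t = 0
    · rw [ht0] at hW ⊢
      rw [p.BW0 v hW, sub_self]
      exact Submodule.zero_mem _
    · have h1 : p.B v - p.θ' t • v ∈ p.Wf (t - 1) :=
        p.BW_twist (by omega) (by omega) v hW
      have h2 : p.B v - p.θ' t • v ∈ p.Zf (t - 1 + 1) := by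
        have h3 : t - 1 + 1 = t := by omega
        rw [h3]
        refine Submodule.sub_mem _ ?_ ?_
        · have := p.B_mem_Zf_pred (i := t + 1) (by omega) v hZ
          simpa using this
        · exact p.Zf_anti (by omega) (Submodule.smul_mem _ _ hZ)
      exact hterm (t - 1) (by omega) (Submodule.mem_inf.mpr ⟨h2, h1⟩)
  rcases p.hIrr P hA hB with h | h
  · rw [Submodule.eq_bot_iff]
    intro v hv
    rw [← Submodule.mem_bot (R := K), ← h]
    exact hterm k (by omega) hv
  · exfalso
    apply p.Wf_ne_top hd
    rw [← top_le_iff, ← h]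
    refine iSup₂_le fun t ht => ?_
    rw [Finset.mem_range, Nat.lt_succ_iff] at ht
    exact le_trans inf_le_right (p.Wf_mono ht)

lemma aeval_tau_succ' {θf : ℕ → K} (T : Module.End K V) (k : ℕ) (v : V) :
    (aeval T (tau θf (k + 1))) v =
      T ((aeval T (tau θf k)) v) - θf k • ((aeval T (tau θf k)) v) := by
  rw [tau, Finset.prod_range_succ, ← tau, mul_comm, map_mul, Module.End.mul_apply]
  rw [map_sub, aeval_X, aeval_C, LinearMap.sub_apply, Module.algebraMap_end_apply]

lemma tau_mem_WZ {v : V} (hv : v ∈ p.Ew 0) :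
    ∀ k, (aeval p.A (tau p.θ k)) v ∈ p.Wf k ⊓ p.Zf k := by
  intro k
  induction k with
  | zero =>
    rw [tau, Finset.range_zero, Finset.prod_empty, map_one, Module.End.one_apply]
    exact Submodule.mem_inf.mpr ⟨p.Ew_le_Wf le_rfl hv, by rw [p.Zf_zero]; trivial⟩
  | succ k ih =>
    obtain ⟨hW, hZ⟩ := Submodule.mem_inf.mp ih
    rw [aeval_tau_succ']
    refine Submodule.mem_inf.mpr ⟨?_, ?_⟩
    · refine Submodule.sub_mem _ (p.A_mem_Wf_succ _ hW) ?_
      exact p.Wf_mono (by omega) (Submodule.smul_mem _ _ hW)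
    · exact p.AZ_twist _ hZ

lemma mem_Yf_of_tau {k : ℕ} (hk1 : 1 ≤ k) (hkd : k ≤ p.d) {v : V}
    (hv : (aeval p.A (tau p.θ k)) v = 0) : v ∈ p.Yf (k - 1) := by
  have hsup : p.Yf (k - 1) ⊔ p.Zf k = ⊤ := by
    rw [← top_le_iff, ← p.hEv_top]
    refine iSup₂_le fun i hi => ?_
    rw [Finset.mem_range, Nat.lt_succ_iff] at hi
    rcases Nat.lt_or_ge i k with h | h
    · exact le_trans (p.Ev_le_Yf (by omega)) le_sup_left
    · exact le_trans (p.Ev_le_Zf h hi) le_sup_right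
  have hvtop : v ∈ p.Yf (k - 1) ⊔ p.Zf k := by rw [hsup]; trivial
  obtain ⟨y, hy, z, hz, hyz⟩ := Submodule.mem_sup.mp hvtop
  have hty : (aeval p.A (tau p.θ k)) y = 0 := by
    have := p.tauA_kill_Y (k - 1) (by omega) y hy
    rwa [show k - 1 + 1 = k by omega] at this
  have htz : (aeval p.A (tau p.θ k)) z = 0 := by
    have : (aeval p.A (tau p.θ k)) (y + z) = 0 := by rw [hyz]; exact hv
    rw [map_add, hty, zero_add] at this
    exact this
  set h : Polynomial K := ∏ i ∈ Finset.Icc k p.d, (X - C (p.θ i)) with hh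
  have hcop : IsCoprime (tau p.θ k) h := by
    rw [tau, hh]
    refine IsCoprime.prod_left fun j hj => ?_
    refine IsCoprime.prod_right fun i hi => ?_
    rw [Finset.mem_range] at hj
    rw [Finset.mem_Icc] at hi
    refine Polynomial.isCoprime_X_sub_C_of_isUnit_sub ?_
    rw [isUnit_iff_ne_zero]
    refine sub_ne_zero_of_ne fun hc => ?_
    have := p.hθ_inj j (by omega) i (by omega) hc
    omega
  obtain ⟨a, b, hab⟩ := hcop
  have hz0 : z = 0 := by
    have h1 : (aeval p.A (a * tau p.θ k + b * h)) z = z := by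
      rw [hab, map_one, Module.End.one_apply]
    rw [map_add, map_mul, map_mul, LinearMap.add_apply, Module.End.mul_apply,
      Module.End.mul_apply, htz, map_zero,
      p.prodZ_kill (p.d + 1) k (by omega) z hz, map_zero, add_zero] at h1
    exact h1.symm
  rw [← hyz, hz0, add_zero]
  exact hy

lemma tau_monic (θf : ℕ → K) (i : ℕ) : (tau θf i).Monic :=
  monic_prod_of_monic _ _ fun k _ => monic_X_sub_C (θf k)

lemma tau_natDegree (θf : ℕ → K) (i : ℕ) : (tau θf i).natDegree = i := by
  rw [tau, natDegree_prod]
  · simp [natDegree_X_sub_C]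
  · intro k _
    exact X_sub_C_ne_zero (θf k)

lemma exists_tau_comb (θf : ℕ → K) :
    ∀ (n : ℕ) (f : Polynomial K), f.natDegree ≤ n →
      ∃ c : ℕ → K, f = ∑ k ∈ Finset.range (n + 1), C (c k) * tau θf k := by
  intro n
  induction n with
  | zero =>
    intro f hf
    refine ⟨fun _ => f.coeff 0, ?_⟩
    rw [Finset.sum_range_one, tau, Finset.range_zero, Finset.prod_empty, mul_one]
    exact eq_C_of_natDegree_le_zero hf
  | succ n ih =>
    intro f hf
    set a := f.coeff (n + 1) with ha
    set g := f - C a * tau θf (n + 1) with hg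
    have hgd : g.natDegree ≤ n := by
      rw [natDegree_le_iff_coeff_eq_zero]
      intro N hN
      rw [hg, coeff_sub, coeff_C_mul]
      rcases Nat.lt_or_ge (n + 1) N with h | h
      · rw [coeff_eq_zero_of_natDegree_lt (lt_of_le_of_lt hf h),
          coeff_eq_zero_of_natDegree_lt (by rw [tau_natDegree]; omega), mul_zero, sub_zero]
      · have hN1 : N = n + 1 := by omega
        have hco : (tau θf (n + 1)).coeff (n + 1) = 1 := by
          have h5 := Monic.coeff_natDegree (tau_monic θf (n + 1))
          rwa [tau_natDegree] at h5
        rw [hN1, hco, mul_one, sub_self]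
    obtain ⟨c, hc⟩ := ih g hgd
    refine ⟨fun k => if k = n + 1 then a else c k, ?_⟩
    have hsum : ∑ k ∈ Finset.range (n + 1), C (if k = n + 1 then a else c k) * tau θf k
        = ∑ k ∈ Finset.range (n + 1), C (c k) * tau θf k := by
      refine Finset.sum_congr rfl fun k hk => ?_
      rw [Finset.mem_range] at hk
      rw [if_neg (by omega)]
    have hfin : f = g + C a * tau θf (n + 1) := by rw [hg]; ring
    rw [Finset.sum_range_succ, hsum, ← hc]
    simp only [if_pos rfl]
    exact hfin

lemma key {A' : Module.End K V} {σ : ℕ → K}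
    (hdiag : ∀ i ≤ p.d, ∀ v ∈ p.Ev i, A' v = σ i • v)
    (htri0 : ∀ v ∈ p.Ew 0, A' v ∈ p.Wf 1) :
    A' ∈ Submodule.span K ({p.A, 1} : Set (Module.End K V)) := by
  classical
  set f : Polynomial K := Lagrange.interpolate (Finset.range (p.d + 1)) p.θ σ with hf
  have hinj : Set.InjOn p.θ ↑(Finset.range (p.d + 1)) := by
    intro i hi j hj hij
    simp only [Finset.coe_range, Set.mem_Iio] at hi hj
    exact p.hθ_inj i (by omega) j (by omega) hij
  have hfeval : ∀ i ≤ p.d, f.eval (p.θ i) = σ i := by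
    intro i hi
    exact Lagrange.eval_interpolate_at_node σ hinj (Finset.mem_range.mpr (by omega))
  have hfdeg : f.natDegree ≤ p.d := by
    by_cases hf0 : f = 0
    · rw [hf0]; simp
    · have h1 := Lagrange.degree_interpolate_lt (r := σ) hinj
      rw [Finset.card_range] at h1
      have := (natDegree_lt_iff_degree_lt hf0).mpr h1
      omega
  have hA'f : A' = aeval p.A f := by
    have hle : (⨆ i ∈ Finset.range (p.d + 1), p.Ev i) ≤ LinearMap.eqLocus A' (aeval p.A f) := by
      refine iSup₂_le fun i hi => fun v hv => ?_
      rw [Finset.mem_range, Nat.lt_succ_iff] at hi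
      rw [LinearMap.mem_eqLocus]
      have hv' : v ∈ Module.End.eigenspace p.A (p.θ i) := by
        rw [← p.hEv_eig i hi]; exact hv
      rw [hdiag i hi v hv, aeval_eigen hv', hfeval i hi]
    rw [p.hEv_top] at hle
    exact LinearMap.ext fun v => LinearMap.mem_eqLocus.mp (hle trivial)
  obtain ⟨c, hc⟩ := exists_tau_comb p.θ p.d f hfdeg
  have hA'sum : A' = ∑ j ∈ Finset.range (p.d + 1), c j • aeval p.A (tau p.θ j) := by
    rw [hA'f, hc, map_sum]
    refine Finset.sum_congr rfl fun j _ => ?_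
    rw [map_mul, aeval_C, Algebra.smul_def]
  have hck : ∀ k, 2 ≤ k → k ≤ p.d → c k = 0 := by
    intro k
    induction k using Nat.strong_induction_on with
    | _ k ih =>
      intro hk2 hkd
      by_contra hckne
      have hd1 : 1 ≤ p.d := by omega
      have hkill : ∀ v ∈ p.Ew 0, (aeval p.A (tau p.θ k)) v = 0 := by
        intro v hv
        have hAv : A' v ∈ p.Wf 1 := htri0 v hv
        have heq : A' v = ∑ j ∈ Finset.range (p.d + 1), c j • (aeval p.A (tau p.θ j)) v := by
          conv_lhs => rw [hA'sum]
          rw [LinearMap.sum_apply]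
          exact Finset.sum_congr rfl fun j _ => by rw [LinearMap.smul_apply]
        have hsplit : ∑ j ∈ Finset.range (k + 1), c j • (aeval p.A (tau p.θ j)) v
            + ∑ j ∈ Finset.Ico (k + 1) (p.d + 1), c j • (aeval p.A (tau p.θ j)) v
            = ∑ j ∈ Finset.range (p.d + 1), c j • (aeval p.A (tau p.θ j)) v :=
          Finset.sum_range_add_sum_Ico _ (by omega)
        set w := ∑ j ∈ Finset.Ico (k + 1) (p.d + 1), c j • (aeval p.A (tau p.θ j)) v with hw
        have hwZ : w ∈ p.Zf (k + 1) := by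
          refine Submodule.sum_mem _ fun j hj => ?_
          rw [Finset.mem_Ico] at hj
          refine Submodule.smul_mem _ _ ?_
          exact p.Zf_anti (by omega) (Submodule.mem_inf.mp (p.tau_mem_WZ hv j)).2
        have hT0 : (aeval p.A (tau p.θ 0)) v = v := by
          rw [tau, Finset.range_zero, Finset.prod_empty, map_one, Module.End.one_apply]
        have hsum2 : ∑ j ∈ Finset.range (k + 1), c j • (aeval p.A (tau p.θ j)) v
            = c 0 • v + c 1 • (aeval p.A (tau p.θ 1)) v
              + c k • (aeval p.A (tau p.θ k)) v := by
          have h21 : ∑ j ∈ Finset.range 2, c j • (aeval p.A (tau p.θ j)) v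
              + ∑ j ∈ Finset.Ico 2 (k + 1), c j • (aeval p.A (tau p.θ j)) v
              = ∑ j ∈ Finset.range (k + 1), c j • (aeval p.A (tau p.θ j)) v :=
            Finset.sum_range_add_sum_Ico _ (by omega)
          have h22 : ∑ j ∈ Finset.Ico 2 (k + 1), c j • (aeval p.A (tau p.θ j)) v
              = c k • (aeval p.A (tau p.θ k)) v := by
            refine Finset.sum_eq_single_of_mem k (Finset.mem_Ico.mpr ⟨by omega, by omega⟩) ?_
            intro j hj hjk
            rw [Finset.mem_Ico] at hj
            rw [ih j (by omega) (by omega) (by omega), zero_smul]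
          rw [← h21, h22, Finset.sum_range_succ, Finset.sum_range_one, hT0]
        have hTk := Submodule.mem_inf.mp (p.tau_mem_WZ hv k)
        have hT1 := Submodule.mem_inf.mp (p.tau_mem_WZ hv 1)
        have hw0 : w = 0 := by
          have hwW : w ∈ p.Wf k := by
            have : w = A' v - (c 0 • v + c 1 • (aeval p.A (tau p.θ 1)) v
                + c k • (aeval p.A (tau p.θ k)) v) := by
              rw [← hsum2]
              rw [heq, ← hsplit]
              abel
            rw [this]
            refine Submodule.sub_mem _ (p.Wf_mono (by omega) hAv) ?_
            refine Submodule.add_mem _ (Submodule.add_mem _ ?_ ?_) ?_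
            · exact p.Wf_mono (by omega) (Submodule.smul_mem _ _ (p.Ew_le_Wf le_rfl hv))
            · exact p.Wf_mono (by omega) (Submodule.smul_mem _ _ hT1.1)
            · exact Submodule.smul_mem _ _ hTk.1
          have := p.ZW_bot hd1 hkd
          rw [Submodule.eq_bot_iff] at this
          exact this w (Submodule.mem_inf.mpr ⟨hwZ, hwW⟩)
        have hckTk : c k • (aeval p.A (tau p.θ k)) v
            = A' v - c 0 • v - c 1 • (aeval p.A (tau p.θ 1)) v := by
          rw [heq, ← hsplit, hw0, hsum2]
          abel
        have hmem1 : c k • (aeval p.A (tau p.θ k)) v ∈ p.Wf (k - 1) := by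
          rw [hckTk]
          refine Submodule.sub_mem _ (Submodule.sub_mem _ ?_ ?_) ?_
          · exact p.Wf_mono (by omega) hAv
          · exact p.Wf_mono (by omega) (Submodule.smul_mem _ _ (p.Ew_le_Wf le_rfl hv))
          · exact p.Wf_mono (by omega) (Submodule.smul_mem _ _ hT1.1)
        have hmem2 : c k • (aeval p.A (tau p.θ k)) v ∈ p.Zf k :=
          Submodule.smul_mem _ _ hTk.2
        have hbot := p.ZW_bot hd1 (show k - 1 ≤ p.d by omega)
        rw [show k - 1 + 1 = k by omega, Submodule.eq_bot_iff] at hbot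
        have h0 := hbot _ (Submodule.mem_inf.mpr ⟨hmem2, hmem1⟩)
        rcases smul_eq_zero.mp h0 with h | h
        · exact absurd h hckne
        · exact h
      apply p.hEw_ne 0 (Nat.zero_le _)
      rw [Submodule.eq_bot_iff]
      intro v hv
      have hvY : v ∈ p.Yf (k - 1) := p.mem_Yf_of_tau (by omega) hkd (hkill v hv)
      have hbot := p.YW_bot hd1 (show k - 1 ≤ p.d - 1 by omega)
      rw [Submodule.eq_bot_iff] at hbot
      exact hbot v (Submodule.mem_inf.mpr ⟨hvY, p.Ew_le_Wf le_rfl hv⟩)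
  rw [Submodule.mem_span_pair]
  rcases Nat.eq_zero_or_pos p.d with hd0 | hd1
  · refine ⟨0, c 0, ?_⟩
    rw [hA'sum, hd0, Finset.sum_range_one]
    rw [tau, Finset.range_zero, Finset.prod_empty, map_one, zero_smul, zero_add]
  · have htau1 : aeval p.A (tau p.θ 1) = p.A - p.θ 0 • 1 := by
      rw [tau, Finset.prod_range_one, map_sub, aeval_X, aeval_C]
      rfl
    refine ⟨c 1, c 0 - c 1 * p.θ 0, ?_⟩
    have hsum3 : ∑ j ∈ Finset.range (p.d + 1), c j • aeval p.A (tau p.θ j)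
        = c 0 • (1 : Module.End K V) + c 1 • aeval p.A (tau p.θ 1) := by
      have h21 : ∑ j ∈ Finset.range 2, c j • aeval p.A (tau p.θ j)
          + ∑ j ∈ Finset.Ico 2 (p.d + 1), c j • aeval p.A (tau p.θ j)
          = ∑ j ∈ Finset.range (p.d + 1), c j • aeval p.A (tau p.θ j) :=
        Finset.sum_range_add_sum_Ico _ (by omega)
      have h22 : ∑ j ∈ Finset.Ico 2 (p.d + 1), c j • aeval p.A (tau p.θ j) = 0 := by
        refine Finset.sum_eq_zero fun j hj => ?_
        rw [Finset.mem_Ico] at hj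
        rw [hck j (by omega) (by omega), zero_smul]
      have h23 : aeval p.A (tau p.θ 0) = (1 : Module.End K V) := by
        rw [tau, Finset.range_zero, Finset.prod_empty, map_one]
      rw [← h21, h22, add_zero, Finset.sum_range_succ, Finset.sum_range_one, h23]
    rw [hA'sum, hsum3, htau1, smul_sub, smul_smul, sub_smul]
    abel
lemma main_mem (p q : TridiagonalPair K V) (hd : q.d = p.d)
    (hEv : ∀ i ≤ p.d, q.Ev i = p.Ev i) (hEw : ∀ i ≤ p.d, q.Ew i = p.Ew i) :
    q.A ∈ Submodule.span K ({p.A, 1} : Set (Module.End K V)) := by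
  apply p.key (σ := q.θ)
  · intro i hi v hv
    have hv' : v ∈ Module.End.eigenspace q.A (q.θ i) := by
      rw [← q.hEv_eig i (by omega), hEv i hi]
      exact hv
    exact Module.End.mem_eigenspace_iff.mp hv'
  · intro v hv
    have hv' : v ∈ q.Ew 0 := by rw [hEw 0 (Nat.zero_le _)]; exact hv
    have h3 := q.hTriA 0 (Nat.zero_le _) v hv'
    have hle : q.Ew (0 - 1) ⊔ q.Ew 0 ⊔ q.Ew 1 ≤ p.Wf 1 := by
      have h0 : q.Ew 0 ≤ p.Wf 1 := by
        rw [hEw 0 (Nat.zero_le _)]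
        exact p.Ew_le_Wf (Nat.zero_le _)
      have h1 : q.Ew 1 ≤ p.Wf 1 := by
        rcases Nat.lt_or_ge p.d 1 with hpd | hpd
        · rw [q.hEw_bot 1 (by omega)]
          exact bot_le
        · rw [hEw 1 hpd]
          exact p.Ew_le_Wf le_rfl
      exact sup_le (sup_le h0 h0) h1
    exact hle h3

end TridiagonalPair

/-- If two tridiagonal pairs on `V` have the same eigenspace orderings, then
`Span{A, I} = Span{A', I}` and `Span{A*, I} = Span{A*', I}`. -/
theorem stmt8 {K V : Type*} [Field K] [AddCommGroup V] [Module K V]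
    [FiniteDimensional K V] (hpos : 0 < Module.finrank K V)
    (p : TridiagonalPair K V)
    (q : TridiagonalPair K V) (hd : q.d = p.d)
    (hEv : ∀ i ≤ p.d, q.Ev i = p.Ev i) (hEw : ∀ i ≤ p.d, q.Ew i = p.Ew i) :
    Submodule.span K ({p.A, 1} : Set (Module.End K V)) =
      Submodule.span K ({q.A, 1} : Set (Module.End K V)) ∧
    Submodule.span K ({p.B, 1} : Set (Module.End K V)) =
      Submodule.span K ({q.B, 1} : Set (Module.End K V)) := by
  have hEv' : ∀ i ≤ q.d, p.Ev i = q.Ev i := fun i hi => (hEv i (by omega)).symm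
  have hEw' : ∀ i ≤ q.d, p.Ew i = q.Ew i := fun i hi => (hEw i (by omega)).symm
  have spanEq : ∀ x y : Module.End K V,
      x ∈ Submodule.span K ({y, 1} : Set (Module.End K V)) →
      y ∈ Submodule.span K ({x, 1} : Set (Module.End K V)) →
      Submodule.span K ({y, 1} : Set (Module.End K V)) =
        Submodule.span K ({x, 1} : Set (Module.End K V)) := by
    intro x y hx hy
    apply le_antisymm
    · rw [Submodule.span_le]
      intro z hz
      rcases hz with hz | hz
      · rw [hz]; exact hy
      · exact Submodule.subset_span (by simp only [Set.mem_insert_iff,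
          Set.mem_singleton_iff] at hz ⊢; right; exact hz)
    · rw [Submodule.span_le]
      intro z hz
      rcases hz with hz | hz
      · rw [hz]; exact hx
      · exact Submodule.subset_span (by simp only [Set.mem_insert_iff,
          Set.mem_singleton_iff] at hz ⊢; right; exact hz)
  constructor
  · exact spanEq q.A p.A (TridiagonalPair.main_mem p q hd hEv hEw)
      (TridiagonalPair.main_mem q p hd.symm hEv' hEw')
  · have h1 := TridiagonalPair.main_mem p.swap q.swap hd hEw hEv
    have h2 := TridiagonalPair.main_mem q.swap p.swap hd.symm hEw' hEv'
    exact spanEq q.B p.B h1 h2
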